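/- Let G be an abelian group, l a prime, and e ≥ 1. Suppose G/l^e is cyclic generated by the class of an element x ∈ G with l^e·x = 0, and G/l ≅ Z/l. Then the natural surjection G/l^{e+1} → G/l^e is an isomorphism, and consequently l^e·G is l-divisible. -/
import Mathlib


/-- The subgroup `n·G` of an abelian group `G`. -/
def nSub (G : Type*) [AddCommGroup G] (n : ℤ) : AddSubgroup G :=
  (n • AddMonoidHom.id G).range

lemma mem_nSub {G : Type*} [AddCommGroup G] {n : ℤ} {g : G} :
    g ∈ nSub G n ↔ ∃ y : G, n • y = g := by
  simp [nSub, AddMonoidHom.mem_range]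

/-- Let `G` be an abelian group, `l` a prime, `e ≥ 1`.  Suppose `G/l^e` is
generated by the class of an `l^e`-torsion element `x ∈ G`, and `G/l ≅ ℤ/l`.
Then the natural surjection `G/l^{e+1} → G/l^e` is an isomorphism (i.e.
`l^e·G ⊆ l^{e+1}·G`), and consequently `l^e·G` is `l`-divisible. -/
theorem stmt_14 {G : Type*} [AddCommGroup G] (l : ℕ) (hl : l.Prime)
    (e : ℕ) (he : 1 ≤ e) (x : G) (hx : ((l : ℤ) ^ e) • x = 0)
    (hgen : ∀ g : G, ∃ a : ℤ, g - a • x ∈ nSub G ((l : ℤ) ^ e))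
    (hmodl : Nonempty ((G ⧸ nSub G (l : ℤ)) ≃+ ZMod l)) :
    (∀ g : G, g ∈ nSub G ((l : ℤ) ^ e) → g ∈ nSub G ((l : ℤ) ^ (e + 1))) ∧
    (∀ g ∈ nSub G ((l : ℤ) ^ e), ∃ y ∈ nSub G ((l : ℤ) ^ e), (l : ℤ) • y = g) := by
  have main : ∀ g : G, g ∈ nSub G ((l : ℤ) ^ e) → g ∈ nSub G ((l : ℤ) ^ (e + 1)) := by
    intro g hg
    obtain ⟨h, hh⟩ := mem_nSub.mp hg
    obtain ⟨a, ha⟩ := hgen h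
    obtain ⟨k, hk⟩ := mem_nSub.mp ha
    have hrep : h = a • x + (l : ℤ) ^ e • k := by
      rw [hk]; abel
    refine mem_nSub.mpr ⟨(l : ℤ) ^ (e - 1) • k, ?_⟩
    have h2e : (e + 1) + (e - 1) = e + e := by omega
    calc ((l : ℤ) ^ (e + 1)) • ((l : ℤ) ^ (e - 1) • k)
        = ((l : ℤ) ^ ((e + 1) + (e - 1))) • k := by rw [smul_smul, ← pow_add]
      _ = ((l : ℤ) ^ e) • ((l : ℤ) ^ e • k) := by rw [h2e, pow_add, mul_smul]
      _ = ((l : ℤ) ^ e) • (a • x + (l : ℤ) ^ e • k) := by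
          rw [smul_add, smul_comm ((l:ℤ)^e) a x, hx, smul_zero, zero_add]
      _ = g := by rw [← hrep, hh]
  refine ⟨main, fun g hg => ?_⟩
  obtain ⟨y', hy'⟩ := mem_nSub.mp (main g hg)
  refine ⟨((l : ℤ) ^ e) • y', mem_nSub.mpr ⟨y', rfl⟩, ?_⟩
  rw [← hy', smul_smul, ← pow_succ']
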